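/- Let A be a bounded linear operator on a complex Hilbert space H and suppose w(A)² = (1/4)‖A*A + AA*‖. Then ‖Re(A) + Im(A)‖ = ‖Re(A) − Im(A)‖. -/

import Mathlib

open ContinuousLinearMap Complex

variable {H : Type*} [NormedAddCommGroup H] [InnerProductSpace ℂ H] [CompleteSpace H]

noncomputable def nrad (A : H →L[ℂ] H) : ℝ :=
  ⨆ x : {x : H // ‖x‖ = 1}, ‖(inner ℂ (A x) (x : H) : ℂ)‖

noncomputable def reP (A : H →L[ℂ] H) : H →L[ℂ] H := (2 : ℂ)⁻¹ • (A + adjoint A)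
noncomputable def imP (A : H →L[ℂ] H) : H →L[ℂ] H := (2 * Complex.I)⁻¹ • (A - adjoint A)

noncomputable def oabs (A : H →L[ℂ] H) : H →L[ℂ] H := cfc Real.sqrt (adjoint A * A)

noncomputable def opow (T : H →L[ℂ] H) (r : ℝ) : H →L[ℂ] H := cfc (fun t : ℝ => t ^ r) T

section Aux

set_option linter.unusedSectionVars false

lemma hinv' : (2*Complex.I:ℂ)⁻¹ = -((2:ℂ)⁻¹*Complex.I) := by
  rw [mul_inv, Complex.inv_I]; ring

lemma imP_eq (A : H →L[ℂ] H) : imP A = (-((2:ℂ)⁻¹*Complex.I)) • (A - adjoint A) := by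
  rw [imP, hinv']

lemma isSelfAdjoint_S (A : H →L[ℂ] H) : IsSelfAdjoint (reP A + imP A) := by
  rw [IsSelfAdjoint, imP_eq, reP]
  simp only [star_add, star_smul, star_sub, star_star, star_eq_adjoint, star_neg,
    adjoint_adjoint, RCLike.star_def, map_inv₀, map_mul, map_neg, Complex.conj_I,
    Complex.conj_ofNat]
  module

lemma isSelfAdjoint_D (A : H →L[ℂ] H) : IsSelfAdjoint (reP A - imP A) := by
  rw [IsSelfAdjoint, imP_eq, reP]
  simp only [star_sub, star_add, star_smul, star_star, star_eq_adjoint, star_neg,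
    adjoint_adjoint, RCLike.star_def, map_inv₀, map_mul, map_neg, Complex.conj_I,
    Complex.conj_ofNat]
  module

lemma sq_add_sq_eq (A : H →L[ℂ] H) : (reP A + imP A)^2 + (reP A - imP A)^2
    = adjoint A * A + A * adjoint A := by
  have hk : ∀ (P Q : H →L[ℂ] H), (P+Q)^2 + (P-Q)^2 = 2•(P*P) + 2•(Q*Q) := by
    intro P Q; noncomm_ring
  rw [hk, reP, imP_eq]
  simp only [smul_mul_smul_comm, add_mul, mul_add, sub_mul, mul_sub]
  have h1 : ((2:ℂ)⁻¹ * (2:ℂ)⁻¹) = (4:ℂ)⁻¹ := by norm_num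
  have h2 : (-((2:ℂ)⁻¹*Complex.I)) * (-((2:ℂ)⁻¹*Complex.I)) = -(4:ℂ)⁻¹ := by
    rw [show (-((2:ℂ)⁻¹*Complex.I)) * (-((2:ℂ)⁻¹*Complex.I))
        = ((2:ℂ)⁻¹*(2:ℂ)⁻¹)*(Complex.I*Complex.I) by ring, Complex.I_mul_I]
    norm_num
  rw [h1, h2]
  module

lemma nrad_bdd (A : H →L[ℂ] H) :
    BddAbove (Set.range fun x : {x : H // ‖x‖ = 1} => ‖(inner ℂ (A x) (x : H) : ℂ)‖) := by
  refine ⟨‖A‖, ?_⟩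
  rintro - ⟨x, rfl⟩
  calc ‖(inner ℂ (A x) (x:H) : ℂ)‖ ≤ ‖A (x:H)‖ * ‖(x:H)‖ := norm_inner_le_norm _ _
    _ ≤ (‖A‖ * ‖(x:H)‖) * ‖(x:H)‖ := by gcongr; exact A.le_opNorm _
    _ = ‖A‖ := by rw [x.2]; ring

lemma nrad_nonneg (A : H →L[ℂ] H) : 0 ≤ nrad A :=
  Real.iSup_nonneg fun _ => norm_nonneg _

lemma inner_le_nrad (A : H →L[ℂ] H) (x : H) :
    ‖(inner ℂ (A x) x : ℂ)‖ ≤ nrad A * ‖x‖ ^ 2 := by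
  rcases eq_or_ne x 0 with rfl | hx
  · simp
  · have hxn : ‖x‖ ≠ 0 := norm_ne_zero_iff.mpr hx
    set u : {x : H // ‖x‖ = 1} := ⟨(‖x‖⁻¹ : ℝ) • x, by
      rw [norm_smul]; simp [abs_of_nonneg, inv_mul_cancel₀ hxn]⟩ with hu
    have h1 : ‖(inner ℂ (A u) (u : H) : ℂ)‖ ≤ nrad A := le_ciSup (nrad_bdd A) u
    have h2 : (inner ℂ (A (u:H)) (u:H) : ℂ) = ((‖x‖⁻¹ : ℝ):ℂ)^2 * inner ℂ (A x) x := by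
      show (inner ℂ (A ((‖x‖⁻¹:ℝ) • x)) ((‖x‖⁻¹:ℝ) • x) : ℂ) = _
      rw [show ((‖x‖⁻¹:ℝ) • x : H) = ((‖x‖⁻¹:ℝ):ℂ) • x from (Complex.coe_smul _ _).symm]
      rw [map_smul, inner_smul_left, inner_smul_right]
      simp [Complex.conj_ofReal]
      ring
    rw [h2] at h1
    rw [norm_mul] at h1
    have : ‖(((‖x‖⁻¹:ℝ):ℂ))^2‖ = (‖x‖^2)⁻¹ := by
      rw [norm_pow, Complex.norm_real]
      simp [_root_.abs_of_nonneg]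
    rw [this] at h1
    have hx2 : (0:ℝ) < ‖x‖^2 := by positivity
    calc ‖(inner ℂ (A x) x : ℂ)‖ = ((‖x‖^2)⁻¹ * ‖(inner ℂ (A x) x : ℂ)‖) * ‖x‖^2 := by
          field_simp
      _ ≤ nrad A * ‖x‖^2 := by gcongr

lemma selfadj_norm_le (T : H →L[ℂ] H) (hT : IsSelfAdjoint T) {M : ℝ} (hM : 0 ≤ M)
    (hb : ∀ x : H, ‖(inner ℂ (T x) x : ℂ)‖ ≤ M * ‖x‖ ^ 2) : ‖T‖ ≤ M := by
  refine T.opNorm_le_bound hM fun x => ?_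
  rcases eq_or_ne (T x) 0 with hTx | hTx
  · rw [hTx, norm_zero]; positivity
  have hxn : (0:ℝ) < ‖T x‖ := norm_pos_iff.mpr hTx
  set c : ℝ := ‖x‖ / ‖T x‖ with hc
  set y : H := ((c:ℝ):ℂ) • T x with hy
  have hyn : ‖y‖ = ‖x‖ := by
    rw [hy, norm_smul, Complex.norm_real, Real.norm_eq_abs, hc,
      _root_.abs_of_nonneg (by positivity), div_mul_cancel₀ _ hxn.ne']
  have hsym : ∀ a b : H, (inner ℂ (T a) b : ℂ) = inner ℂ a (T b) := fun a b =>
    hT.isSymmetric a b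
  have key : (inner ℂ (T (x + y)) (x + y) : ℂ) - inner ℂ (T (x - y)) (x - y)
      = 4 * ((inner ℂ (T x) y : ℂ).re : ℂ) := by
    have h1 : (inner ℂ (T y) x : ℂ) = (starRingEnd ℂ) (inner ℂ (T x) y) := by
      rw [hsym y x, inner_conj_symm]
    have h2 := Complex.add_conj (inner ℂ (T x) y : ℂ)
    push_cast at h2
    simp only [map_add, map_sub, inner_add_left, inner_add_right, inner_sub_left,
      inner_sub_right, h1]
    linear_combination 2 * h2
  have hre : ((inner ℂ (T x) y : ℂ)).re = ‖x‖ * ‖T x‖ := by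
    rw [hy, inner_smul_right]
    rw [show (inner ℂ (T x) (T x) : ℂ) = ((‖T x‖:ℂ))^2 from inner_self_eq_norm_sq_to_K _]
    rw [hc]
    have : ((‖x‖ / ‖T x‖ : ℝ) : ℂ) * ((‖T x‖:ℂ))^2 = ((‖x‖ * ‖T x‖ : ℝ) : ℂ) := by
      have hT0 : (‖T x‖:ℂ) ≠ 0 := by exact_mod_cast hxn.ne'
      push_cast
      field_simp
    rw [this, Complex.ofReal_re]
  have habs : ‖(inner ℂ (T (x+y)) (x+y) : ℂ) - inner ℂ (T (x-y)) (x-y)‖ = 4 * (‖x‖ * ‖T x‖) := by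
    rw [key, hre]
    rw [show (4:ℂ) * ((‖x‖ * ‖T x‖ : ℝ):ℂ) = (((4 * (‖x‖ * ‖T x‖) : ℝ)):ℂ) by push_cast; ring]
    rw [Complex.norm_real, Real.norm_eq_abs, _root_.abs_of_nonneg (by positivity)]
  have h3 : 4 * (‖x‖ * ‖T x‖) ≤ ‖(inner ℂ (T (x+y)) (x+y) : ℂ)‖ + ‖(inner ℂ (T (x-y)) (x-y) : ℂ)‖ := by
    rw [← habs]; exact norm_sub_le _ _
  have h4 : ‖(inner ℂ (T (x+y)) (x+y) : ℂ)‖ + ‖(inner ℂ (T (x-y)) (x-y) : ℂ)‖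
      ≤ M * ‖x+y‖^2 + M * ‖x-y‖^2 := add_le_add (hb _) (hb _)
  have hpar := parallelogram_law_with_norm ℂ x y
  rw [hyn] at hpar
  have h5 : M * ‖x+y‖^2 + M * ‖x-y‖^2 = 4 * (M * ‖x‖^2) := by
    simp only [pow_two]
    linear_combination M * hpar
  have h6 : ‖x‖ * ‖T x‖ ≤ M * ‖x‖^2 := by linarith
  rcases eq_or_ne x 0 with rfl | hx0
  · simp at hTx
  · have hx : (0:ℝ) < ‖x‖ := norm_pos_iff.mpr hx0
    rw [pow_two] at h6
    calc ‖T x‖ = (‖x‖ * ‖T x‖) / ‖x‖ := by field_simp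
      _ ≤ (M * (‖x‖ * ‖x‖)) / ‖x‖ := by gcongr
      _ = M * ‖x‖ := by field_simp

lemma inner_S (A : H →L[ℂ] H) (x : H) :
    (inner ℂ ((reP A + imP A) x) x : ℂ)
      = ((((inner ℂ (A x) x : ℂ).re - (inner ℂ (A x) x : ℂ).im : ℝ)) : ℂ) := by
  simp only [reP, imP_eq, add_apply, smul_apply, add_apply, sub_apply, inner_add_left,
    inner_smul_left, inner_sub_left, adjoint_inner_left]
  have hre : (inner ℂ x (A x) : ℂ).re = (inner ℂ (A x) x : ℂ).re := by
    rw [← inner_conj_symm x (A x), Complex.conj_re]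
  have him : (inner ℂ x (A x) : ℂ).im = -(inner ℂ (A x) x : ℂ).im := by
    rw [← inner_conj_symm x (A x), Complex.conj_im]
  rw [Complex.ext_iff]
  constructor <;> simp [hre, him] <;> ring

lemma inner_D (A : H →L[ℂ] H) (x : H) :
    (inner ℂ ((reP A - imP A) x) x : ℂ)
      = ((((inner ℂ (A x) x : ℂ).re + (inner ℂ (A x) x : ℂ).im : ℝ)) : ℂ) := by
  simp only [reP, imP_eq, sub_apply, smul_apply, add_apply, inner_sub_left, inner_add_left,
    inner_smul_left, adjoint_inner_left]
  have hre : (inner ℂ x (A x) : ℂ).re = (inner ℂ (A x) x : ℂ).re := by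
    rw [← inner_conj_symm x (A x), Complex.conj_re]
  have him : (inner ℂ x (A x) : ℂ).im = -(inner ℂ (A x) x : ℂ).im := by
    rw [← inner_conj_symm x (A x), Complex.conj_im]
  rw [Complex.ext_iff]
  constructor <;> simp [hre, him] <;> ring

lemma abs_combo_le (z : ℂ) (ε : ℝ) (hε : ε = 1 ∨ ε = -1) :
    |z.re + ε * z.im| ≤ Real.sqrt 2 * ‖z‖ := by
  have hn : ‖z‖^2 = z.re*z.re + z.im*z.im := by
    rw [Complex.sq_norm, Complex.normSq_apply]
  have h : (z.re + ε * z.im)^2 ≤ 2 * ‖z‖^2 := by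
    rcases hε with rfl | rfl <;> nlinarith [sq_nonneg (z.re - z.im), sq_nonneg (z.re + z.im)]
  have h2 : (Real.sqrt 2 * ‖z‖)^2 = 2 * ‖z‖^2 := by
    rw [mul_pow, Real.sq_sqrt (by norm_num : (0:ℝ) ≤ 2)]
  rw [← Real.sqrt_sq_eq_abs]
  calc Real.sqrt ((z.re + ε * z.im)^2) ≤ Real.sqrt (2 * ‖z‖^2) := Real.sqrt_le_sqrt h
    _ = Real.sqrt 2 * ‖z‖ := by rw [← h2, Real.sqrt_sq (by positivity)]

end Aux

theorem stmt4 (A : H →L[ℂ] H) (h : (nrad A) ^ 2 = (1/4) * ‖adjoint A * A + A * adjoint A‖) :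
    ‖reP A + imP A‖ = ‖reP A - imP A‖ := by
  have hw : 0 ≤ nrad A := nrad_nonneg A
  have hM : (0:ℝ) ≤ Real.sqrt 2 * nrad A := by positivity
  have hSb : ‖reP A + imP A‖ ≤ Real.sqrt 2 * nrad A := by
    refine selfadj_norm_le _ (isSelfAdjoint_S A) hM fun x => ?_
    rw [inner_S, Complex.norm_real, Real.norm_eq_abs]
    calc |(inner ℂ (A x) x : ℂ).re - (inner ℂ (A x) x : ℂ).im|
        ≤ Real.sqrt 2 * ‖(inner ℂ (A x) x : ℂ)‖ := by
          have := abs_combo_le (inner ℂ (A x) x : ℂ) (-1) (Or.inr rfl)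
          rw [show (inner ℂ (A x) x : ℂ).re + (-1) * (inner ℂ (A x) x : ℂ).im
              = (inner ℂ (A x) x : ℂ).re - (inner ℂ (A x) x : ℂ).im by ring] at this
          exact this
      _ ≤ Real.sqrt 2 * (nrad A * ‖x‖^2) :=
          mul_le_mul_of_nonneg_left (inner_le_nrad A x) (Real.sqrt_nonneg 2)
      _ = (Real.sqrt 2 * nrad A) * ‖x‖^2 := by ring
  have hDb : ‖reP A - imP A‖ ≤ Real.sqrt 2 * nrad A := by
    refine selfadj_norm_le _ (isSelfAdjoint_D A) hM fun x => ?_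
    rw [inner_D, Complex.norm_real, Real.norm_eq_abs]
    calc |(inner ℂ (A x) x : ℂ).re + (inner ℂ (A x) x : ℂ).im|
        ≤ Real.sqrt 2 * ‖(inner ℂ (A x) x : ℂ)‖ := by
          have := abs_combo_le (inner ℂ (A x) x : ℂ) 1 (Or.inl rfl)
          rw [one_mul] at this
          exact this
      _ ≤ Real.sqrt 2 * (nrad A * ‖x‖^2) :=
          mul_le_mul_of_nonneg_left (inner_le_nrad A x) (Real.sqrt_nonneg 2)
      _ = (Real.sqrt 2 * nrad A) * ‖x‖^2 := by ring
  have hnorm : ‖adjoint A * A + A * adjoint A‖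
      ≤ ‖reP A + imP A‖^2 + ‖reP A - imP A‖^2 := by
    rw [← sq_add_sq_eq A]
    calc ‖(reP A + imP A)^2 + (reP A - imP A)^2‖
        ≤ ‖(reP A + imP A)^2‖ + ‖(reP A - imP A)^2‖ := norm_add_le _ _
      _ = ‖reP A + imP A‖^2 + ‖reP A - imP A‖^2 := by
          have hmul : ∀ T : H →L[ℂ] H, IsSelfAdjoint T → ‖T * T‖ = ‖T‖ * ‖T‖ := by
            intro T hT
            nth_rewrite 1 [← hT.star_eq]
            exact CStarRing.norm_star_mul_self
          rw [pow_two, pow_two, pow_two, pow_two,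
            hmul _ (isSelfAdjoint_S A), hmul _ (isSelfAdjoint_D A)]
  have hS2 : ‖reP A + imP A‖^2 ≤ 2 * (nrad A)^2 := by
    nlinarith [norm_nonneg (reP A + imP A), Real.sq_sqrt (by norm_num : (0:ℝ) ≤ 2),
      Real.sqrt_nonneg 2]
  have hD2 : ‖reP A - imP A‖^2 ≤ 2 * (nrad A)^2 := by
    nlinarith [norm_nonneg (reP A - imP A), Real.sq_sqrt (by norm_num : (0:ℝ) ≤ 2),
      Real.sqrt_nonneg 2]
  have heq : ‖reP A + imP A‖^2 = ‖reP A - imP A‖^2 := by linarith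
  have := congrArg Real.sqrt heq
  rwa [Real.sqrt_sq (norm_nonneg _), Real.sqrt_sq (norm_nonneg _)] at this
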